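/- If U and V are commutative languages (closed under permutation of letters of their words), then perm(U ⧢ V) = U ⧢ V; more generally, for any languages U, V, perm(U ⧢ V) = perm(U) ⧢ perm(V), and in particular every strict shuffle language L (one satisfying L = shuffle over a in Sigma of pi_a(L)) is commutative: perm(L) = L. -/

import Mathlib

open List

/-- Commutative (permutation) closure of a language. -/
def permCl {α : Type} (L : Language α) : Language α := {w | ∃ v ∈ L, w.Perm v}

/-- A path in an NFA from a state to a state, labeled by a word, visiting the given
list of states. -/
inductive NPath {α σ : Type} (M : NFA α σ) : σ → List α → σ → List σ → Prop
  | nil (q : σ) : NPath M q [] q [q]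
  | cons {q q' p : σ} {a : α} {w : List α} {qs : List σ} :
      q' ∈ M.step q a → NPath M q' w p qs → NPath M q (a :: w) p (q :: qs)

/-- The set of words labeling simple accepting paths (no repeated state). -/
def Lsimple {α σ : Type} (M : NFA α σ) : Language α :=
  {w | ∃ s ∈ M.start, ∃ f ∈ M.accept, ∃ qs, NPath M s w f qs ∧ qs.Nodup}

/-- Reachability between states of an NFA. -/
def Reach {α σ : Type} (M : NFA α σ) (p q : σ) : Prop := ∃ w : List α, q ∈ M.evalFrom {p} w

/-- A partially ordered (weakly acyclic) NFA: reachability is antisymmetric,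
equivalently the only loops are self-loops. -/
def PartiallyOrdered {α σ : Type} (M : NFA α σ) : Prop :=
  ∀ p q, Reach M p q → Reach M q p → p = q

/-- A partial deterministic finite automaton viewed as an NFA. -/
def IsPDFA {α σ : Type} (M : NFA α σ) : Prop :=
  M.start.Subsingleton ∧ ∀ q a, (M.step q a).Subsingleton

/-- `L` is recognized by a deterministic finite automaton with at most `N` states. -/
def RecognizableWithin {α : Type} (L : Language α) (N : ℕ) : Prop :=
  ∃ (σ : Type) (_ : Fintype σ) (D : DFA α σ), Fintype.card σ ≤ N ∧ D.accepts = L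

/-- `IsShuffle u v w` : `w` is an interleaving of `u` and `v`. -/
inductive IsShuffle {α : Type} : List α → List α → List α → Prop
  | nil : IsShuffle [] [] []
  | left {u v w : List α} {a : α} : IsShuffle u v w → IsShuffle (a :: u) v (a :: w)
  | right {u v w : List α} {a : α} : IsShuffle u v w → IsShuffle u (a :: v) (a :: w)

/-- Shuffle of two languages. -/
def lshuffle {α : Type} (U V : Language α) : Language α :=
  {w | ∃ u ∈ U, ∃ v ∈ V, IsShuffle u v w}

/-- Iterated shuffle of a list of languages. -/
def shuffleList {α : Type} : List (Language α) → Language α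
  | [] => {[]}
  | L :: Ls => lshuffle L (shuffleList Ls)

/-- Unary projection of a language onto the letter `a`. -/
def proj {α : Type} [DecidableEq α] (a : α) (L : Language α) : Language α :=
  (fun u => List.replicate (u.count a) a) '' L

/-- A strict shuffle language: it equals the shuffle of its unary projections over
the whole alphabet. -/
def IsStrictShuffle {α : Type} [Fintype α] [DecidableEq α] (L : Language α) : Prop :=
  L = shuffleList ((Finset.univ : Finset α).toList.map (fun a => proj a L))

/-- `Γ^*` : all words over the subalphabet `Γ`. -/
def subStar {α : Type} (Γ : Set α) : Language α := {w | ∀ x ∈ w, x ∈ Γ}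

/-- The APC atom `Σ₀^* a₁ Σ₁^* ⋯ aₙ Σₙ^*`, given by the initial subalphabet and the
list of pairs `(aᵢ, Σᵢ)`. -/
def apcAtom {α : Type} (Γ0 : Set α) : List (α × Set α) → Language α
  | [] => subStar Γ0
  | (a, Γ) :: rest => subStar Γ0 * (({[a]} : Language α) * apcAtom Γ rest)

/-- An Alphabetical Pattern Constraint language: a finite union of APC atoms. -/
def IsAPC {α : Type} (L : Language α) : Prop :=
  ∃ parts : List (Set α × List (α × Set α)),
    L = {w | ∃ p ∈ parts, w ∈ apcAtom p.1 p.2}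

lemma shuffle_perm_append {α : Type} {u v w : List α} (h : IsShuffle u v w) :
    w.Perm (u ++ v) := by
  induction h with
  | nil => exact List.Perm.refl _
  | left _ ih => exact ih.cons _
  | right _ ih => exact (ih.cons _).trans List.perm_middle.symm

lemma shuffle_append {α : Type} (u v : List α) : IsShuffle u v (u ++ v) := by
  induction u with
  | nil =>
    induction v with
    | nil => exact IsShuffle.nil
    | cons a v ih => exact IsShuffle.right ih
  | cons a u ih => exact IsShuffle.left ih

lemma exists_shuffle_of_perm {α : Type} :
    ∀ (w u v : List α), (u ++ v).Perm w →
      ∃ u' v', u'.Perm u ∧ v'.Perm v ∧ IsShuffle u' v' w := by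
  intro w
  induction w with
  | nil =>
    intro u v h
    rcases List.append_eq_nil_iff.1 (List.Perm.eq_nil h) with ⟨rfl, rfl⟩
    exact ⟨[], [], List.Perm.refl _, List.Perm.refl _, IsShuffle.nil⟩
  | cons a w ih =>
    intro u v h
    have ha : a ∈ u ++ v := (h.mem_iff).2 List.mem_cons_self
    rcases List.mem_append.1 ha with hu | hv
    · rcases List.append_of_mem hu with ⟨u₁, u₂, rfl⟩
      have h2 : ((u₁ ++ u₂) ++ v).Perm w := by
        have : (a :: ((u₁ ++ u₂) ++ v)).Perm (a :: w) := by
          refine List.Perm.trans ?_ h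
          calc (a :: ((u₁ ++ u₂) ++ v)) = a :: (u₁ ++ (u₂ ++ v)) := by simp
            _ ~ u₁ ++ a :: (u₂ ++ v) := List.perm_middle.symm
            _ = (u₁ ++ a :: u₂) ++ v := by simp
        exact this.cons_inv
      rcases ih (u₁ ++ u₂) v h2 with ⟨u', v', hu', hv', hs⟩
      refine ⟨a :: u', v', ?_, hv', IsShuffle.left hs⟩
      exact (hu'.cons a).trans List.perm_middle.symm
    · rcases List.append_of_mem hv with ⟨v₁, v₂, rfl⟩
      have h2 : (u ++ (v₁ ++ v₂)).Perm w := by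
        have : (a :: (u ++ (v₁ ++ v₂))).Perm (a :: w) := by
          refine List.Perm.trans ?_ h
          calc (a :: (u ++ (v₁ ++ v₂))) = a :: ((u ++ v₁) ++ v₂) := by simp
            _ ~ (u ++ v₁) ++ a :: v₂ := List.perm_middle.symm
            _ = u ++ (v₁ ++ a :: v₂) := by simp
        exact this.cons_inv
      rcases ih u (v₁ ++ v₂) h2 with ⟨u', v', hu', hv', hs⟩
      refine ⟨u', a :: v', hu', ?_, IsShuffle.right hs⟩
      exact (hv'.cons a).trans List.perm_middle.symm

lemma permCl_lshuffle {α : Type} (U V : Language α) :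
    permCl (lshuffle U V) = lshuffle (permCl U) (permCl V) := by
  ext w
  constructor
  · rintro ⟨w₀, ⟨u, hu, v, hv, hs⟩, hw⟩
    have hperm : (u ++ v).Perm w := ((hw.trans (shuffle_perm_append hs))).symm
    rcases exists_shuffle_of_perm w u v hperm with ⟨u', v', hu', hv', hs'⟩
    exact ⟨u', ⟨u, hu, hu'⟩, v', ⟨v, hv, hv'⟩, hs'⟩
  · rintro ⟨u', ⟨u, hu, hu'⟩, v', ⟨v, hv, hv'⟩, hs⟩
    refine ⟨u ++ v, ⟨u, hu, v, hv, shuffle_append u v⟩, ?_⟩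
    exact (shuffle_perm_append hs).trans (hu'.append hv')

lemma permCl_shuffleList {α : Type} (Ls : List (Language α))
    (h : ∀ L ∈ Ls, permCl L = L) : permCl (shuffleList Ls) = shuffleList Ls := by
  induction Ls with
  | nil =>
    ext w
    simp only [shuffleList]
    constructor
    · rintro ⟨v, hv, hw⟩
      have : v = ([] : List α) := hv
      subst this
      exact List.Perm.eq_nil hw
    · rintro rfl
      exact ⟨[], rfl, List.Perm.refl _⟩
  | cons L Ls ih =>
    have h1 := h L List.mem_cons_self
    have h2 := ih (fun M hM => h M (List.mem_cons_of_mem _ hM))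
    show permCl (lshuffle L (shuffleList Ls)) = lshuffle L (shuffleList Ls)
    rw [permCl_lshuffle, h1, h2]

lemma permCl_proj {α : Type} [DecidableEq α] (a : α) (L : Language α) :
    permCl (proj a L) = proj a L := by
  ext w
  constructor
  · rintro ⟨v, ⟨x, hx, rfl⟩, hw⟩
    have hlen : w.length = (List.replicate (x.count a) a).length := hw.length_eq
    have : w = List.replicate (x.count a) a := by
      rw [List.eq_replicate_iff]
      refine ⟨by simpa using hlen, fun b hb => ?_⟩
      have := hw.mem_iff.1 hb
      exact List.eq_of_mem_replicate this
    rw [this]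
    exact ⟨x, hx, rfl⟩
  · intro hw
    exact ⟨w, hw, List.Perm.refl _⟩

/-- If `U, V` are commutative then `perm(U ⧢ V) = U ⧢ V`; in general
`perm(U ⧢ V) = perm(U) ⧢ perm(V)`; and every strict shuffle language is commutative. -/
theorem stmt18 {α : Type} [Fintype α] [DecidableEq α] :
    (∀ U V : Language α, permCl U = U → permCl V = V →
      permCl (lshuffle U V) = lshuffle U V)
    ∧ (∀ U V : Language α, permCl (lshuffle U V) = lshuffle (permCl U) (permCl V))
    ∧ (∀ L : Language α, IsStrictShuffle L → permCl L = L) := by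
  refine ⟨fun U V hU hV => ?_, permCl_lshuffle, fun L hL => ?_⟩
  · rw [permCl_lshuffle, hU, hV]
  · rw [hL]
    apply permCl_shuffleList
    intro M hM
    rcases List.mem_map.1 hM with ⟨a, _, rfl⟩
    exact permCl_proj a L
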